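/- Let d ≥ 2 and n ≥ 1 be integers, r ∈ (0,1), and let F : ℝ^d → ℝ^d be a bijection that is Lipschitz with constant L_F and whose inverse F^{−1} is Lipschitz with constant L_{F^{−1}} (Euclidean norm). Then ∫_{F(K)} ‖H^r(F^{−1}(y)) − F^{−1}(y)‖₂² dy ≤ L_F^d · (2r−1)² · d · n^{−2}, where K = [0,1]^d, F(K) is the image of K under F, and the integral is with respect to Lebesgue measure. -/

import Mathlib

open MeasureTheory
open scoped ENNReal NNReal

/-- `h` is affine on the interval `[a, b]`. -/
def AffineOn (h : ℝ → ℝ) (a b : ℝ) : Prop :=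
  ∃ m c : ℝ, ∀ x ∈ Set.Icc a b, h x = m * x + c

/-- `h` is the continuous piecewise-linear function `h^r` from the paper. -/
def IsHr (n : ℕ) (r : ℝ) (h : ℝ → ℝ) : Prop :=
  Continuous h ∧
  (∀ x : ℝ, x ∉ Set.Icc (0:ℝ) 1 → h x = x) ∧
  (∀ j : ℕ, j ≤ n → h ((j : ℝ) / n) = (j : ℝ) / n) ∧
  (∀ j : ℕ, j < n → h (((j : ℝ) + r) / n) = ((j : ℝ) + 1 - r) / n) ∧
  (∀ j : ℕ, j < n → AffineOn h ((j : ℝ) / n) (((j : ℝ) + r) / n)) ∧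
  (∀ j : ℕ, j < n → AffineOn h (((j : ℝ) + r) / n) (((j : ℝ) + 1) / n))

/-- The coordinatewise map `H^r : ℝ^d → ℝ^d`. -/
noncomputable def Hmap (d : ℕ) (h : ℝ → ℝ) (x : EuclideanSpace ℝ (Fin d)) :
    EuclideanSpace ℝ (Fin d) :=
  WithLp.toLp 2 (fun i => h (x i))

/-- The unit cube `K = [0,1]^d`. -/
def unitCube (d : ℕ) : Set (EuclideanSpace ℝ (Fin d)) :=
  {x | ∀ i, x i ∈ Set.Icc (0:ℝ) 1}

lemma affine_dev {h : ℝ → ℝ} {a b x : ℝ} (hx : x ∈ Set.Icc a b) (haff : AffineOn h a b) :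
    |h x - x| ≤ max |h a - a| |h b - b| := by
  obtain ⟨m, c, H⟩ := haff
  have hab : a ≤ b := hx.1.trans hx.2
  rw [H x hx, H a ⟨le_refl a, hab⟩, H b ⟨hab, le_refl b⟩]
  have e : ∀ t : ℝ, m * t + c - t = (m - 1) * t + c := fun t => by ring
  rw [e, e, e]
  rcases le_total 0 (m - 1) with hm | hm
  · exact abs_le_max_abs_abs (by nlinarith [hx.1]) (by nlinarith [hx.2])
  · rw [max_comm]
    exact abs_le_max_abs_abs (by nlinarith [hx.2]) (by nlinarith [hx.1])

lemma hr_dev_bound {n : ℕ} (hn : 1 ≤ n) {r : ℝ} (hr : r ∈ Set.Ioo (0:ℝ) 1) {h : ℝ → ℝ}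
    (hh : IsHr n r h) {x : ℝ} (hx : x ∈ Set.Icc (0:ℝ) 1) :
    |h x - x| ≤ |1 - 2 * r| / n := by
  obtain ⟨-, -, hnode, hmid, haff1, haff2⟩ := hh
  have hn0 : (0:ℝ) < n := by exact_mod_cast hn
  obtain ⟨j, hjn, hxl, hxr⟩ : ∃ j : ℕ, j < n ∧ (j : ℝ) / n ≤ x ∧ x ≤ ((j : ℝ) + 1) / n := by
    rcases eq_or_lt_of_le hx.2 with h1 | h1
    · refine ⟨n - 1, by omega, ?_, ?_⟩
      · have : ((n - 1 : ℕ) : ℝ) = (n : ℝ) - 1 := by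
          push_cast [Nat.cast_sub hn]; ring
        subst h1
        rw [this, div_le_one hn0]; linarith
      · have : ((n - 1 : ℕ) : ℝ) + 1 = (n : ℝ) := by push_cast [Nat.cast_sub hn]; ring
        rw [this, div_self hn0.ne']; exact hx.2
    · refine ⟨(⌊x * n⌋).toNat, ?_, ?_, ?_⟩
      · have h0 : (0:ℝ) ≤ x * n := mul_nonneg hx.1 hn0.le
        have : ⌊x * n⌋ < (n : ℤ) := by
          apply Int.floor_lt.mpr; push_cast; nlinarith
        omega
      · have h0 : (0:ℝ) ≤ x * n := mul_nonneg hx.1 hn0.le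
        have hfl : ((⌊x * n⌋).toNat : ℝ) = (⌊x * n⌋ : ℝ) := by
          exact_mod_cast Int.toNat_of_nonneg (Int.floor_nonneg.mpr h0)
        rw [hfl, div_le_iff₀ hn0]
        exact Int.floor_le _
      · have h0 : (0:ℝ) ≤ x * n := mul_nonneg hx.1 hn0.le
        have hfl : ((⌊x * n⌋).toNat : ℝ) = (⌊x * n⌋ : ℝ) := by
          exact_mod_cast Int.toNat_of_nonneg (Int.floor_nonneg.mpr h0)
        rw [hfl, le_div_iff₀ hn0]
        linarith [Int.lt_floor_add_one (x * n)]
  have dev0 : h ((j : ℝ) / n) - (j : ℝ) / n = 0 := by rw [hnode j hjn.le]; ring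
  have dev1 : h (((j : ℝ) + 1) / n) - ((j : ℝ) + 1) / n = 0 := by
    have := hnode (j + 1) hjn
    push_cast at this
    rw [this]; ring
  have devm : |h (((j : ℝ) + r) / n) - ((j : ℝ) + r) / n| = |1 - 2 * r| / n := by
    rw [hmid j hjn, div_sub_div_same, show ((j:ℝ) + 1 - r - ((j:ℝ) + r)) = 1 - 2*r by ring,
      abs_div, abs_of_pos hn0]
  rcases le_total x (((j : ℝ) + r) / n) with hc | hc
  · have := affine_dev ⟨hxl, hc⟩ (haff1 j hjn)
    rw [dev0, devm, abs_zero] at this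
    exact this.trans_eq (max_eq_right (by positivity))
  · have := affine_dev ⟨hc, hxr⟩ (haff2 j hjn)
    rw [dev1, devm, abs_zero] at this
    exact this.trans_eq (max_eq_left (by positivity))

lemma unitCube_isCompact (d : ℕ) : IsCompact (unitCube d) := by
  have heq : unitCube d =
      (EuclideanSpace.equiv (Fin d) ℝ).toHomeomorph ⁻¹'
        (Set.pi Set.univ fun _ : Fin d => Set.Icc (0:ℝ) 1) := by
    ext x
    simp only [unitCube, Set.mem_setOf_eq, Set.mem_preimage, Set.mem_univ_pi, Set.mem_Icc]
    exact Iff.rfl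
  rw [heq]
  exact (Homeomorph.isCompact_preimage _).mpr (isCompact_univ_pi fun _ => isCompact_Icc)

lemma unitCube_volume (d : ℕ) : volume (unitCube d) = 1 := by
  have heq : unitCube d =
      (MeasurableEquiv.toLp 2 (Fin d → ℝ)).symm ⁻¹'
        (Set.pi Set.univ fun _ : Fin d => Set.Icc (0:ℝ) 1) := by
    ext x
    simp only [unitCube, Set.mem_setOf_eq, Set.mem_preimage, Set.mem_univ_pi, Set.mem_Icc]
    exact Iff.rfl
  rw [heq, (EuclideanSpace.volume_preserving_symm_measurableEquiv_toLp (Fin d)).measure_preimage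
    (MeasurableSet.univ_pi fun _ => measurableSet_Icc).nullMeasurableSet]
  rw [volume_pi_pi]
  simp [Real.volume_Icc]

lemma image_volume_le (d : ℕ) (F : EuclideanSpace ℝ (Fin d) → EuclideanSpace ℝ (Fin d))
    (LF : ℝ≥0) (hF : LipschitzWith LF F) :
    volume (F '' unitCube d) ≤ (LF : ℝ≥0∞) ^ d := by
  haveI : (μH[(d:ℝ)] : Measure (EuclideanSpace ℝ (Fin d))).IsAddHaarMeasure := by
    rw [show ((d:ℕ):ℝ) = ((Module.finrank ℝ (EuclideanSpace ℝ (Fin d)) : ℕ) : ℝ) by simp [finrank_euclideanSpace_fin]]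
    infer_instance
  have huniq : (volume : Measure (EuclideanSpace ℝ (Fin d))) =
      Measure.addHaarScalarFactor volume (μH[(d:ℝ)] : Measure (EuclideanSpace ℝ (Fin d))) • (μH[(d:ℝ)] : Measure (EuclideanSpace ℝ (Fin d))) :=
    Measure.isAddLeftInvariant_eq_smul _ _
  have him : μH[(d:ℝ)] (F '' unitCube d) ≤ (LF : ℝ≥0∞) ^ d * μH[(d:ℝ)] (unitCube d) := by
    simpa [ENNReal.rpow_natCast] using
      hF.hausdorffMeasure_image_le (by positivity : (0:ℝ) ≤ (d:ℝ)) (unitCube d)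
  calc volume (F '' unitCube d)
      = Measure.addHaarScalarFactor volume (μH[(d:ℝ)] : Measure (EuclideanSpace ℝ (Fin d))) * μH[(d:ℝ)] (F '' unitCube d) := by
        conv_lhs => rw [huniq]
        rw [Measure.smul_apply, ENNReal.smul_def, smul_eq_mul]
    _ ≤ Measure.addHaarScalarFactor volume (μH[(d:ℝ)] : Measure (EuclideanSpace ℝ (Fin d))) *
        ((LF : ℝ≥0∞) ^ d * μH[(d:ℝ)] (unitCube d)) := mul_le_mul_right him _
    _ = (LF : ℝ≥0∞) ^ d *
        (Measure.addHaarScalarFactor volume (μH[(d:ℝ)] : Measure (EuclideanSpace ℝ (Fin d))) * μH[(d:ℝ)] (unitCube d)) := by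
        ring
    _ = (LF : ℝ≥0∞) ^ d * volume (unitCube d) := by
        conv_rhs => rw [huniq]
        rw [Measure.smul_apply, ENNReal.smul_def, smul_eq_mul]
    _ = (LF : ℝ≥0∞) ^ d := by rw [unitCube_volume, mul_one]

/-- Lemma 2.1 of the paper (inverse estimate):
`‖H^r ∘ F^{−1} − F^{−1}‖²_{L²(F(K))} ≤ L_F^d (2r−1)² d n^{−2}`. -/
theorem inverse_Hr_error (d n : ℕ) (hd : 2 ≤ d) (hn : 1 ≤ n) (r : ℝ)
    (hr : r ∈ Set.Ioo (0:ℝ) 1) (h : ℝ → ℝ) (hh : IsHr n r h)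
    (F Finv : EuclideanSpace ℝ (Fin d) → EuclideanSpace ℝ (Fin d)) (LF LFinv : ℝ≥0)
    (hF : LipschitzWith LF F) (hFinv : LipschitzWith LFinv Finv)
    (hleft : Function.LeftInverse Finv F) (hright : Function.RightInverse Finv F) :
    ∫ y in F '' unitCube d, ‖Hmap d h (Finv y) - Finv y‖ ^ 2 ≤
      (LF : ℝ) ^ d * (2 * r - 1) ^ 2 * d / (n : ℝ) ^ 2 := by
  have hn0 : (0:ℝ) < n := by exact_mod_cast hn
  set C : ℝ := (d : ℝ) * (2 * r - 1) ^ 2 / (n : ℝ) ^ 2 with hC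
  have hC0 : 0 ≤ C := by positivity
  have hFK : IsCompact (F '' unitCube d) := (unitCube_isCompact d).image hF.continuous
  have hfin : volume (F '' unitCube d) < ∞ := hFK.measure_lt_top
  -- pointwise bound
  have hpt : ∀ y ∈ F '' unitCube d, ‖Hmap d h (Finv y) - Finv y‖ ^ 2 ≤ C := by
    rintro y ⟨x, hxK, rfl⟩
    rw [hleft x]
    have hnorm : ‖Hmap d h x - x‖ ^ 2 = ∑ i, (h (x i) - x i) ^ 2 := by
      rw [EuclideanSpace.norm_eq, Real.sq_sqrt (by positivity)]
      congr 1
      ext i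
      simp [Hmap, Real.norm_eq_abs, sq_abs]
    rw [hnorm]
    calc ∑ i, (h (x i) - x i) ^ 2 ≤ ∑ _i : Fin d, (2 * r - 1) ^ 2 / (n : ℝ) ^ 2 := by
          apply Finset.sum_le_sum
          intro i _
          have hb := hr_dev_bound hn hr hh (hxK i)
          have h1 : (h (x i) - x i) ^ 2 ≤ (|1 - 2 * r| / n) ^ 2 := by
            rw [← sq_abs]
            exact pow_le_pow_left₀ (abs_nonneg _) hb 2
          calc (h (x i) - x i) ^ 2 ≤ (|1 - 2 * r| / n) ^ 2 := h1
            _ = (2 * r - 1) ^ 2 / (n : ℝ) ^ 2 := by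
                rw [div_pow, sq_abs]; ring_nf
      _ = C := by rw [Finset.sum_const, Finset.card_univ, Fintype.card_fin, nsmul_eq_mul, hC]; ring
  -- integral bound
  have hkey : ∫ y in F '' unitCube d, ‖Hmap d h (Finv y) - Finv y‖ ^ 2 ≤
      C * (volume (F '' unitCube d)).toReal := by
    have h1 := norm_setIntegral_le_of_norm_le_const (μ := volume) hfin
      (C := C) (f := fun y => ‖Hmap d h (Finv y) - Finv y‖ ^ 2)
      (fun y hy => by
        rw [Real.norm_eq_abs, abs_of_nonneg (by positivity)]
        exact hpt y hy)
    calc ∫ y in F '' unitCube d, ‖Hmap d h (Finv y) - Finv y‖ ^ 2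
        ≤ ‖∫ y in F '' unitCube d, ‖Hmap d h (Finv y) - Finv y‖ ^ 2‖ := le_abs_self _
      _ ≤ C * (volume (F '' unitCube d)).toReal := h1
  have hvr : (volume (F '' unitCube d)).toReal ≤ (LF : ℝ) ^ d := by
    have := ENNReal.toReal_mono (by simp) (image_volume_le d F LF hF)
    simpa [ENNReal.toReal_pow] using this
  calc ∫ y in F '' unitCube d, ‖Hmap d h (Finv y) - Finv y‖ ^ 2
      ≤ C * (volume (F '' unitCube d)).toReal := hkey
    _ ≤ C * (LF : ℝ) ^ d := by
        exact mul_le_mul_of_nonneg_left hvr hC0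
    _ = (LF : ℝ) ^ d * (2 * r - 1) ^ 2 * d / (n : ℝ) ^ 2 := by rw [hC]; ring
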